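/- Let f : ℝⁿ → ℝ be a function and A ⊆ ℝⁿ an open set on which f is differentiable with nonvanishing gradient. Then A ∩ f⁻¹({0}) has Lebesgue measure zero. -/

import Mathlib

open Metric MeasureTheory
open scoped ENNReal Pointwise

theorem stmt2 {n : ℕ} (f : EuclideanSpace ℝ (Fin n) → ℝ)
    (g : EuclideanSpace ℝ (Fin n) → EuclideanSpace ℝ (Fin n))
    (A : Set (EuclideanSpace ℝ (Fin n))) (hA : IsOpen A)
    (hf : ∀ x ∈ A, HasGradientAt f (g x) x) (hg : ∀ x ∈ A, g x ≠ 0) :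
    volume (A ∩ f ⁻¹' {0}) = 0 := by
  classical
  set μ : Measure (EuclideanSpace ℝ (Fin n)) := volume
  set s : Set (EuclideanSpace ℝ (Fin n)) := A ∩ f ⁻¹' {0} with hs
  by_contra hμs
  -- the measurable hull of `s`
  set t : Set (EuclideanSpace ℝ (Fin n)) := toMeasurable μ s with ht
  have hst : s ⊆ t := subset_toMeasurable μ s
  have htm : MeasurableSet t := measurableSet_toMeasurable μ s
  -- density points
  have hdens := Besicovitch.ae_tendsto_measure_inter_div_of_measurableSet μ htm
  -- find a density point inside `s`
  obtain ⟨x, hxs, hx⟩ : ∃ x ∈ s, Filter.Tendsto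
      (fun r => μ (t ∩ closedBall x r) / μ (closedBall x r)) (nhdsWithin 0 (Set.Ioi 0))
      (nhds (t.indicator 1 x)) := by
    by_contra h
    push_neg at h
    apply hμs
    rw [MeasureTheory.ae_iff] at hdens
    exact measure_mono_null (fun x hx hP => h x hx hP) hdens
  have hx1 : t.indicator (1 : EuclideanSpace ℝ (Fin n) → ℝ≥0∞) x = 1 := Set.indicator_of_mem (hst hxs) 1
  rw [hx1] at hx
  -- the gradient at x
  obtain ⟨hxA, hfx⟩ := hxs
  set v : EuclideanSpace ℝ (Fin n) := g x with hv
  have hv0 : v ≠ 0 := hg x hxA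
  have hvn : (0:ℝ) < ‖v‖ := norm_pos_iff.2 hv0
  have hfd : HasFDerivAt f (InnerProductSpace.toDual ℝ (EuclideanSpace ℝ (Fin n)) v) x := (hf x hxA).hasFDerivAt
  -- quantitative estimate
  have hlo := (hasFDerivAt_iff_isLittleO_nhds_zero.1 hfd).def (half_pos hvn)
  obtain ⟨δ, hδ, hδ'⟩ := Metric.eventually_nhds_iff_ball.1 hlo
  -- the cone
  set C : Set (EuclideanSpace ℝ (Fin n)) := {h : EuclideanSpace ℝ (Fin n) | ‖v‖ / 2 * ‖h‖ < inner ℝ v h} with hC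
  have hCopen : IsOpen C := isOpen_lt (continuous_const.mul continuous_norm) (continuous_const.inner continuous_id)
  have hCsmul : ∀ r : ℝ, 0 < r → r • C = C := by
    intro r hr
    ext h
    constructor
    · rintro ⟨h', hh', rfl⟩
      have : ‖v‖ / 2 * ‖h'‖ < inner ℝ v h' := hh'
      simp only [hC, Set.mem_setOf_eq, norm_smul, real_inner_smul_right,
        Real.norm_eq_abs, abs_of_pos hr]
      nlinarith
    · intro hh
      refine ⟨r⁻¹ • h, ?_, by simp [smul_smul, mul_inv_cancel₀ hr.ne']⟩
      have : ‖v‖ / 2 * ‖h‖ < inner ℝ v h := hh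
      have hrinv : (0:ℝ) < r⁻¹ := inv_pos.2 hr
      simp only [hC, Set.mem_setOf_eq, norm_smul, real_inner_smul_right,
        Real.norm_eq_abs, abs_of_pos hrinv]
      nlinarith
  -- the half of v is in the unit ball cone
  have hmem : ((2 * ‖v‖)⁻¹ • v) ∈ C ∩ ball 0 1 := by
    constructor
    · have h1 : (0:ℝ) < (2 * ‖v‖)⁻¹ := by positivity
      simp only [hC, Set.mem_setOf_eq, norm_smul, real_inner_smul_right,
        Real.norm_eq_abs, abs_of_pos h1, real_inner_self_eq_norm_sq]
      nlinarith [mul_pos h1 (mul_pos hvn hvn)]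
    · simp only [mem_ball, dist_zero_right, norm_smul, Real.norm_eq_abs]
      rw [abs_of_pos (by positivity : (0:ℝ) < (2 * ‖v‖)⁻¹)]
      rw [inv_mul_eq_div, div_lt_one (by positivity)]
      nlinarith
  set β : ℝ≥0∞ := μ (closedBall (0 : EuclideanSpace ℝ (Fin n)) 1) with hβ
  set cc : ℝ≥0∞ := μ (C ∩ closedBall (0 : EuclideanSpace ℝ (Fin n)) 1) with hcc
  have hβ0 : β ≠ 0 := (measure_closedBall_pos μ 0 one_pos).ne'
  have hβtop : β ≠ ∞ := measure_closedBall_lt_top.ne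
  have hcc0 : cc ≠ 0 := by
    have : (0:ℝ≥0∞) < μ (C ∩ ball (0 : EuclideanSpace ℝ (Fin n)) 1) :=
      (hCopen.inter isOpen_ball).measure_pos μ ⟨_, hmem⟩
    exact fun h => absurd (measure_mono_null
      (Set.inter_subset_inter_right C ball_subset_closedBall) h) this.ne'
  have hcctop : cc ≠ ∞ :=
    ((measure_mono Set.inter_subset_right).trans_lt measure_closedBall_lt_top).ne
  have hccβ : cc ≤ β := measure_mono Set.inter_subset_right
  -- the ratio bound
  have key : ∀ r : ℝ, 0 < r → r < δ →
      μ (t ∩ closedBall x r) / μ (closedBall x r) ≤ (β - cc) / β := by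
    intro r hr hrδ
    set D : Set (EuclideanSpace ℝ (Fin n)) := (x + ·) '' (C ∩ closedBall 0 r) with hD
    have hDeq : D = (fun y => -x + y) ⁻¹' (C ∩ closedBall 0 r) := by
      ext y
      simp only [hD, Set.mem_image, Set.mem_preimage]
      constructor
      · rintro ⟨h, hh, rfl⟩; simpa using hh
      · intro hh; exact ⟨-x + y, hh, by abel⟩
    have hDsub : D ⊆ closedBall x r := by
      rintro _ ⟨h, ⟨_, hh2⟩, rfl⟩
      simpa [dist_eq_norm] using hh2
    have hDm : MeasurableSet D := by
      rw [hDeq]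
      exact (hCopen.measurableSet.inter measurableSet_closedBall).preimage
        (measurable_const_add _)
    have hμD : μ D = ENNReal.ofReal (r ^ n) * cc := by
      have h1 : μ D = μ (C ∩ closedBall 0 r) := by
        rw [hDeq, measure_preimage_add]
      have h2 : C ∩ closedBall (0 : EuclideanSpace ℝ (Fin n)) r = r • (C ∩ closedBall (0 : EuclideanSpace ℝ (Fin n)) 1) := by
        rw [Set.smul_set_inter₀ hr.ne', hCsmul r hr, _root_.smul_closedBall _ _ zero_le_one,
          smul_zero, Real.norm_eq_abs, abs_of_pos hr, mul_one]
      rw [h1, h2, Measure.addHaar_smul, finrank_euclideanSpace_fin, abs_of_pos (pow_pos hr n)]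
    have hsD : s ∩ closedBall x r ⊆ closedBall x r \ D := by
      rintro y ⟨⟨hyA, hyf⟩, hyB⟩
      refine ⟨hyB, ?_⟩
      rintro ⟨h, ⟨hhC, hhB⟩, rfl⟩
      have hhδ : h ∈ ball (0 : EuclideanSpace ℝ (Fin n)) δ := by
        simp only [mem_ball, dist_zero_right]
        calc ‖h‖ ≤ r := by simpa using hhB
        _ < δ := hrδ
      have := hδ' h hhδ
      have hfy : f (x + h) = 0 := hyf
      have hfx0 : f x = 0 := hfx
      rw [hfy, hfx0] at this
      simp only [InnerProductSpace.toDual_apply_apply, zero_sub, zero_sub, norm_neg] at this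
      have h2 : ‖v‖ / 2 * ‖h‖ < inner ℝ v h := hhC
      have h3 : |(inner ℝ v h : ℝ)| ≤ ‖v‖ / 2 * ‖h‖ := by
        simpa [Real.norm_eq_abs, neg_add_eq_sub, norm_sub_rev] using this
      have := le_abs_self (inner ℝ v h : ℝ)
      linarith
    have hts : μ (t ∩ closedBall x r) = μ (s ∩ closedBall x r) :=
      Measure.measure_toMeasurable_inter_of_sFinite measurableSet_closedBall s
    have hnum : μ (t ∩ closedBall x r) ≤ ENNReal.ofReal (r ^ n) * (β - cc) := by
      rw [hts]
      calc μ (s ∩ closedBall x r) ≤ μ (closedBall x r \ D) := measure_mono hsD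
      _ = μ (closedBall x r) - μ D :=
          measure_diff hDsub hDm.nullMeasurableSet
            ((measure_mono hDsub).trans_lt measure_closedBall_lt_top).ne
      _ = ENNReal.ofReal (r ^ n) * β - ENNReal.ofReal (r ^ n) * cc := by
          rw [hμD, Measure.addHaar_closedBall' μ x hr.le, finrank_euclideanSpace_fin]
      _ = ENNReal.ofReal (r ^ n) * (β - cc) := by
          rw [ENNReal.mul_sub (fun _ _ => ENNReal.ofReal_ne_top)]
    have hden : μ (closedBall x r) = ENNReal.ofReal (r ^ n) * β := by
      rw [Measure.addHaar_closedBall' μ x hr.le, finrank_euclideanSpace_fin]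
    rw [hden]
    calc μ (t ∩ closedBall x r) / (ENNReal.ofReal (r ^ n) * β)
        ≤ ENNReal.ofReal (r ^ n) * (β - cc) / (ENNReal.ofReal (r ^ n) * β) :=
          ENNReal.div_le_div_right hnum _
    _ = (β - cc) / β := ENNReal.mul_div_mul_left _ _
          (by simp [ENNReal.ofReal_eq_zero, not_le, pow_pos hr]) ENNReal.ofReal_ne_top
  -- conclude
  have hev : ∀ᶠ r in nhdsWithin (0:ℝ) (Set.Ioi 0),
      μ (t ∩ closedBall x r) / μ (closedBall x r) ≤ (β - cc) / β := by
    filter_upwards [Ioo_mem_nhdsGT hδ] with r hr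
    exact key r hr.1 hr.2
  have hle : (1:ℝ≥0∞) ≤ (β - cc) / β := le_of_tendsto hx hev
  have hlt : (β - cc) / β < 1 := by
    rw [ENNReal.div_lt_iff (Or.inl hβ0) (Or.inl hβtop), one_mul]
    exact ENNReal.sub_lt_self hβtop hβ0 hcc0
  exact absurd (hle.trans_lt hlt) (lt_irrefl _)
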